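/- Let X, ℓ, n be positive integers with X > 1, ℓ > 1, ℓ odd, and let p be an odd prime. If (X^ℓ - 1)/(X - 1) = p^n, then ℓ is an odd prime and p ≡ 1 (mod 2ℓ). -/

import Mathlib

open Finset

/-- Factorization of the geometric sum over `range (d*m)`. -/
lemma geom_sum_factor (X d m : ℕ) :
    ∑ i ∈ range (d * m), X ^ i
      = (∑ j ∈ range m, (X ^ d) ^ j) * (∑ i ∈ range d, X ^ i) := by
  induction m with
  | zero => simp
  | succ m ih =>
    have hsplit : range (d * (m + 1)) = range (d * m) ∪ Ico (d * m) (d * m + d) := by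
      rw [range_eq_Ico, range_eq_Ico, Finset.Ico_union_Ico_eq_Ico (Nat.zero_le _)
        (Nat.le_add_right _ _)]
      congr 1
    rw [hsplit, Finset.sum_union, ih, Finset.sum_Ico_eq_sum_range]
    · have : ∑ i ∈ range (d * m + d - d * m), X ^ (d * m + i)
          = X ^ (d * m) * ∑ i ∈ range d, X ^ i := by
      
        simp [Nat.add_sub_cancel_left, pow_add, Finset.mul_sum]
      rw [this, Finset.sum_range_succ]
      ring_nf
    · rw [range_eq_Ico]
      exact Finset.Ico_disjoint_Ico_consecutive 0 (d * m) (d * m + d)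

lemma geom_sum_dvd_geom_sum (X d ℓ : ℕ) (hdl : d ∣ ℓ) :
    (∑ i ∈ range d, X ^ i) ∣ ∑ i ∈ range ℓ, X ^ i := by
  obtain ⟨m, rfl⟩ := hdl
  rw [geom_sum_factor]
  exact dvd_mul_left _ _

lemma geom_sum_gt_one {X d : ℕ} (hX : 1 < X) (hd : 2 ≤ d) :
    1 < ∑ i ∈ range d, X ^ i := by
  have : ∑ i ∈ range 2, X ^ i ≤ ∑ i ∈ range d, X ^ i := by
    apply Finset.sum_le_sum_of_subset (Finset.range_subset_range.2 hd)
  have h2 : ∑ i ∈ range 2, X ^ i = 1 + X := by simp [Finset.sum_range_succ]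
  omega

/-- binomial trick: if `a^2 = 0` and `p*a = 0` then `(1+a)^i = 1 + i*a`. -/
lemma pow_one_add (R : Type*) [CommRing R] (a : R) (ha : a * a = 0) (i : ℕ) :
    (1 + a) ^ i = 1 + (i : R) * a := by
  induction i with
  | zero => simp
  | succ i ih =>
    have ha2 : a ^ 2 = 0 := by rwa [pow_two]
    rw [pow_succ, ih]
    push_cast
    ring_nf
    rw [ha2]
    ring

/-- If `p` is an odd prime and `p ∣ X - 1` (with `1 ≤ X`), then `p^2` does not divide
the geometric sum `∑_{i<p} X^i`. -/
lemma not_sq_dvd_geom_sum {X p : ℕ} (hp : p.Prime) (hpodd : Odd p) (hX : 1 < X)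
    (hdvd : p ∣ X - 1) : ¬ (p ^ 2 ∣ ∑ i ∈ range p, X ^ i) := by
  intro hsq
  obtain ⟨k, hk⟩ := hdvd
  have hX1 : X = 1 + p * k := by omega
  set R := ZMod (p ^ 2)
  have hp2 : ((p : R) * (k : R)) * ((p : R) * (k : R)) = 0 := by
    have : ((p : R) * (p : R)) = 0 := by
      have : (((p ^ 2 : ℕ)) : R) = 0 := ZMod.natCast_self _
      push_cast at this
      rw [← this]; ring
    calc ((p : R) * (k : R)) * ((p : R) * (k : R))
        = ((p : R) * (p : R)) * ((k : R) * (k : R)) := by ring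
      _ = 0 := by rw [this, zero_mul]
  have hcast : ((∑ i ∈ range p, X ^ i : ℕ) : R) = (p : R) := by
    push_cast
    rw [hX1]
    simp only [R]
    push_cast
    have := pow_one_add R ((p : R) * (k : R)) hp2
    calc ∑ i ∈ range p, ((1 : R) + p * k) ^ i
        = ∑ i ∈ range p, ((1 : R) + (i : R) * (p * k)) := by
          exact Finset.sum_congr rfl fun i _ => this i
      _ = (p : R) + (∑ i ∈ range p, (i : R)) * (p * k) := by
          rw [Finset.sum_add_distrib, ← Finset.sum_mul]; simp
      _ = (p : R) := by
          have hsum : (∑ i ∈ range p, (i : R)) = ((p * ((p - 1) / 2) : ℕ) : R) := by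
            have h1 : (∑ i ∈ range p, (i : ℕ)) = p * ((p - 1) / 2) := by
              have h2 := Finset.sum_range_id_mul_two p
              obtain ⟨t, ht⟩ := hpodd
              subst ht
              have hc : (2 * t + 1 - 1) / 2 = t := by omega
              rw [hc]
              have hx : (2 * t + 1) * (2 * t + 1 - 1) = ((2 * t + 1) * t) * 2 := by
                have : 2 * t + 1 - 1 = 2 * t := by omega
                rw [this]; ring
              omega
            rw [← h1, Nat.cast_sum]
          rw [hsum]
          rw [Nat.cast_mul]
          have hpp : (p : R) * ((p : R) * (k : R)) = 0 := by
            have h0 : ((p : R) * (p : R)) = 0 := by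
              have : (((p ^ 2 : ℕ)) : R) = 0 := ZMod.natCast_self _
              push_cast at this
              rw [← this]; ring
            calc (p : R) * ((p : R) * (k : R)) = ((p : R) * (p : R)) * k := by ring
              _ = 0 := by rw [h0, zero_mul]
          calc (p : R) + (p : R) * (((p - 1) / 2 : ℕ) : R) * ((p : R) * (k : R))
              = (p : R) + (((p - 1) / 2 : ℕ) : R) * ((p : R) * ((p : R) * (k : R))) := by ring
            _ = (p : R) := by rw [hpp, mul_zero, add_zero]
  have h0 : ((∑ i ∈ range p, X ^ i : ℕ) : R) = 0 :=
    (ZMod.natCast_eq_zero_iff _ _).2 hsq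
  rw [hcast] at h0
  have : p ^ 2 ∣ p := (ZMod.natCast_eq_zero_iff _ _).1 h0
  have hp2le := Nat.le_of_dvd hp.pos this
  have := hp.two_le
  nlinarith [this, hp2le]

theorem stmt_4 (X ℓ n p : ℕ) (hX : 1 < X) (hℓ : 1 < ℓ) (hℓodd : Odd ℓ)
    (hn : 0 < n) (hp : p.Prime) (hpodd : Odd p)
    (h : ∑ i ∈ Finset.range ℓ, X ^ i = p ^ n) :
    ℓ.Prime ∧ p ≡ 1 [MOD 2 * ℓ] := by
  haveI : Fact p.Prime := ⟨hp⟩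
  -- each geometric sum over a divisor > 1 of ℓ is divisible by p
  have key : ∀ d : ℕ, d ∣ ℓ → 2 ≤ d → p ∣ ∑ i ∈ range d, X ^ i := by
    intro d hdl hd2
    have hdvd : (∑ i ∈ range d, X ^ i) ∣ p ^ n := h ▸ geom_sum_dvd_geom_sum X d ℓ hdl
    have hgt := geom_sum_gt_one hX hd2
    obtain ⟨m, hm, hle⟩ := (Nat.dvd_prime_pow hp).1 hdvd
    rcases Nat.eq_zero_or_pos m with hm0 | hm0
    · simp [hm0] at hle; omega
    · rw [hle]
      exact dvd_pow_self p hm0.ne'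
  set x : ZMod p := (X : ZMod p) with hxdef
  -- p ∣ geom sum d → x^d = 1
  have pow_eq_one : ∀ d : ℕ, p ∣ (∑ i ∈ range d, X ^ i) → x ^ d = 1 := by
    intro d hd
    have h0 : ((∑ i ∈ range d, X ^ i : ℕ) : ZMod p) = 0 :=
      (ZMod.natCast_eq_zero_iff _ _).2 hd
    push_cast at h0
    have := geom_sum_mul x d
    rw [h0, zero_mul] at this
    have : x ^ d - 1 = 0 := this.symm
    linear_combination this
  have hxl : x ^ ℓ = 1 := pow_eq_one ℓ (key ℓ dvd_rfl hℓ)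
  have hx0 : x ≠ 0 := by
    intro hx
    rw [hx, zero_pow (by omega)] at hxl
    exact zero_ne_one hxl
  set e := orderOf x with hedef
  have hel : e ∣ ℓ := orderOf_dvd_of_pow_eq_one hxl
  have hep : e ∣ p - 1 := ZMod.orderOf_dvd_card_sub_one hx0
  -- e ≠ 1
  have he1 : e ≠ 1 := by
    intro he
    have hx1 : x = 1 := orderOf_eq_one_iff.1 he
    have hpX : p ∣ X - 1 := by
      have : ((X : ZMod p) - 1) = 0 := by rw [← hxdef, hx1, sub_self]
      have h2 : (((X - 1 : ℕ)) : ZMod p) = 0 := by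
        push_cast [Nat.cast_sub (by omega : 1 ≤ X)]
        exact this
      exact (ZMod.natCast_eq_zero_iff _ _).1 h2
    -- then p ∣ ℓ
    have hpl : p ∣ ℓ := by
      have h0 : ((∑ i ∈ range ℓ, X ^ i : ℕ) : ZMod p) = 0 :=
        (ZMod.natCast_eq_zero_iff _ _).2 (key ℓ dvd_rfl hℓ)
      push_cast at h0
      rw [← hxdef, hx1] at h0
      simp at h0
      exact (ZMod.natCast_eq_zero_iff _ _).1 (by exact_mod_cast h0)
    -- S(p) is a power of p, divisible by p but not p^2, hence = p; but S(p) > p.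
    have hSdvd : (∑ i ∈ range p, X ^ i) ∣ p ^ n := h ▸ geom_sum_dvd_geom_sum X p ℓ hpl
    obtain ⟨m, hm, hSe⟩ := (Nat.dvd_prime_pow hp).1 hSdvd
    have hgt := geom_sum_gt_one hX hp.two_le
    have hm1 : m = 1 := by
      rcases Nat.lt_or_ge m 2 with hm2 | hm2
      · interval_cases m
        · simp at hSe; omega
        · rfl
      · exfalso
        apply not_sq_dvd_geom_sum hp hpodd hX hpX
        rw [hSe]
        exact pow_dvd_pow p hm2
    rw [hm1, pow_one] at hSe
    -- but S(p) > p
    have : p < ∑ i ∈ range p, X ^ i := by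
      have : ∑ i ∈ range p, 1 < ∑ i ∈ range p, X ^ i := by
        apply Finset.sum_lt_sum
        · intro i _; exact Nat.one_le_pow _ _ (by omega)
        · exact ⟨1, Finset.mem_range.2 hp.one_lt, by simpa using hX⟩
      simpa using this
    omega
  -- every prime divisor of ℓ equals e
  have hprime_eq : ∀ {q : ℕ}, q.Prime → q ∣ ℓ → q = e := by
    intro q hq hql
    have hxq : x ^ q = 1 := pow_eq_one q (key q hql hq.two_le)
    have : e ∣ q := orderOf_dvd_of_pow_eq_one hxq
    rcases (Nat.dvd_prime hq).1 this with h1 | h1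
    · exact absurd h1 he1
    · exact h1.symm
  -- so ℓ is a power of e
  have hℓpow := Nat.eq_prime_pow_of_unique_prime_dvd (by omega : ℓ ≠ 0) hprime_eq
  set k := ℓ.primeFactorsList.length with hkdef
  have heprime : e.Prime := by
    have : ℓ.minFac.Prime := Nat.minFac_prime (by omega)
    have := hprime_eq this (Nat.minFac_dvd ℓ)
    rwa [← this]
  have hk1 : k = 1 := by
    by_contra hk
    have hk0 : k ≠ 0 := by
      intro h0; rw [h0, pow_zero] at hℓpow; omega
    have hk2 : 2 ≤ k := by omega
    -- e^2 ∣ ℓ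
    have he2l : e ^ 2 ∣ ℓ := hℓpow ▸ pow_dvd_pow e hk2
    -- T = ∑_{i<e} (X^e)^i divides p^n and is > 1, so p ∣ T, so e = 0 in ZMod p
    have hTdvd : (∑ i ∈ range e, (X ^ e) ^ i) ∣ p ^ n := by
      rw [← h]
      have h1 : (∑ i ∈ range e, (X ^ e) ^ i) ∣ ∑ i ∈ range (e * e), X ^ i := by
        rw [geom_sum_factor]
        exact Dvd.intro _ rfl
      have h2 : (∑ i ∈ range (e * e), X ^ i) ∣ ∑ i ∈ range ℓ, X ^ i :=
        geom_sum_dvd_geom_sum X _ _ (by rwa [← pow_two])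
      exact h1.trans h2
    have hTgt : 1 < ∑ i ∈ range e, (X ^ e) ^ i :=
      geom_sum_gt_one (Nat.one_lt_pow heprime.pos.ne' hX) heprime.two_le
    have hpT : p ∣ ∑ i ∈ range e, (X ^ e) ^ i := by
      obtain ⟨m, hm, hle⟩ := (Nat.dvd_prime_pow hp).1 hTdvd
      rcases Nat.eq_zero_or_pos m with hm0 | hm0
      · simp [hm0] at hle; omega
      · rw [hle]; exact dvd_pow_self p hm0.ne'
    have h0 : ((∑ i ∈ range e, (X ^ e) ^ i : ℕ) : ZMod p) = 0 :=
      (ZMod.natCast_eq_zero_iff _ _).2 hpT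
    push_cast at h0
    have hxe : x ^ e = 1 := pow_orderOf_eq_one x
    rw [← hxdef] at h0
    rw [hxe] at h0
    simp at h0
    have hpe : p ∣ e := (ZMod.natCast_eq_zero_iff _ _).1 (by exact_mod_cast h0)
    -- but e ∣ p - 1 so e ≤ p - 1 < p
    have he0 : 0 < e := heprime.pos
    have hple : p ≤ e := Nat.le_of_dvd he0 hpe
    have : e ≤ p - 1 := Nat.le_of_dvd (by have := hp.two_le; omega) hep
    omega
  have hℓe : ℓ = e := by rw [hℓpow, hk1, pow_one]
  constructor
  · rw [hℓe]; exact heprime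
  · -- p ≡ 1 [MOD 2ℓ]
    have hlp : ℓ ∣ p - 1 := hℓe ▸ hep
    have h2p : 2 ∣ p - 1 := by
      obtain ⟨t, ht⟩ := hpodd
      omega
    have hco : Nat.Coprime 2 ℓ := by
      exact Nat.coprime_two_left.2 hℓodd
    have hm2 : 1 ≡ p [MOD 2] := (Nat.modEq_iff_dvd' (by have := hp.two_le; omega)).2 h2p
    have hmℓ : 1 ≡ p [MOD ℓ] := (Nat.modEq_iff_dvd' (by have := hp.two_le; omega)).2 hlp
    exact ((Nat.modEq_and_modEq_iff_modEq_mul hco).1 ⟨hm2, hmℓ⟩).symm
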